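/- arXiv:1307.0643 — 2 statements merged into one kernel-verified Lean document; each statement's English description precedes it below -/
import Mathlib

section
/- The information content is a supermodular set function: for all subsets A, B of {1,...,n}, I(X_{A∪B}) + I(X_{A∩B}) ≥ I(X_A) + I(X_B). -/
open Real Finset

/-- Shannon entropy of a (probability mass) function on a finite type. -/
noncomputable def entH {α : Type*} [Fintype α] (q : α → ℝ) : ℝ :=
  ∑ x, Real.negMulLog (q x)

/-- Marginal of `p` on the coordinate set `A`. -/
noncomputable def marg {V Λ : Type*} [Fintype V] [DecidableEq V] [Fintype Λ] [DecidableEq Λ]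
    (p : (V → Λ) → ℝ) (A : Finset V) : (A → Λ) → ℝ :=
  fun y => ∑ x : V → Λ, if ∀ i : A, x i.1 = y i then p x else 0

/-- Marginal probability of the `A`-part of the full realization `x`. -/
noncomputable def margAt {V Λ : Type*} [Fintype V] [DecidableEq V] [Fintype Λ] [DecidableEq Λ]
    (p : (V → Λ) → ℝ) (A : Finset V) (x : V → Λ) : ℝ :=
  marg p A (fun i => x i.1)

/-- Information content `I(X_A) = ∑_{i∈A} H(X_i) − H(X_A)`
(this formula automatically gives `0` when `|A| < 2`). -/
noncomputable def info {V Λ : Type*} [Fintype V] [DecidableEq V] [Fintype Λ] [DecidableEq Λ]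
    (p : (V → Λ) → ℝ) (A : Finset V) : ℝ :=
  (∑ i ∈ A, entH (marg p {i})) - entH (marg p A)

/-- Kullback–Leibler divergence. -/
noncomputable def KL {α : Type*} [Fintype α] (q r : α → ℝ) : ℝ :=
  ∑ x, q x * Real.log (q x / r x)

set_option linter.unusedSectionVars false

section aux
variable {V Λ : Type*} [Fintype V] [DecidableEq V] [Fintype Λ] [DecidableEq Λ]

lemma margAt_def (p : (V → Λ) → ℝ) (C : Finset V) (x : V → Λ) :
    margAt p C x = ∑ x' : V → Λ, if ∀ i ∈ C, x' i = x i then p x' else 0 := by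
  unfold margAt marg
  exact Finset.sum_congr rfl fun x' _ => if_congr (by simp) rfl rfl

lemma agr_term_nonneg (p : (V → Λ) → ℝ) (hp : ∀ x, 0 ≤ p x) (C : Finset V) (x x' : V → Λ) :
    (0:ℝ) ≤ if ∀ i ∈ C, x' i = x i then p x' else 0 := by
  by_cases h : ∀ i ∈ C, x' i = x i
  · rw [if_pos h]; exact hp x'
  · rw [if_neg h]

lemma margAt_nonneg (p : (V → Λ) → ℝ) (hp : ∀ x, 0 ≤ p x) (C : Finset V) (x : V → Λ) :
    0 ≤ margAt p C x := by
  rw [margAt_def]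
  exact Finset.sum_nonneg fun x' _ => agr_term_nonneg p hp C x x'

lemma le_margAt (p : (V → Λ) → ℝ) (hp : ∀ x, 0 ≤ p x) (C : Finset V) (x : V → Λ) :
    p x ≤ margAt p C x := by
  rw [margAt_def]
  have := Finset.single_le_sum (f := fun x' : V → Λ => if ∀ i ∈ C, x' i = x i then p x' else 0)
    (fun x' _ => agr_term_nonneg p hp C x x') (Finset.mem_univ x)
  simpa using this

lemma margAt_mono (p : (V → Λ) → ℝ) (hp : ∀ x, 0 ≤ p x) {C D : Finset V} (h : C ⊆ D)
    (x : V → Λ) : margAt p D x ≤ margAt p C x := by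
  rw [margAt_def, margAt_def]
  refine Finset.sum_le_sum fun x' _ => ?_
  by_cases hD : ∀ i ∈ D, x' i = x i
  · rw [if_pos hD, if_pos fun i hi => hD i (h hi)]
  · rw [if_neg hD]
    exact agr_term_nonneg p hp C x x'

lemma margAt_congr (p : (V → Λ) → ℝ) (C : Finset V) {x x' : V → Λ}
    (h : ∀ i ∈ C, x i = x' i) : margAt p C x = margAt p C x' := by
  rw [margAt_def, margAt_def]
  refine Finset.sum_congr rfl fun z _ => if_congr ⟨fun hz i hi => (hz i hi).trans (h i hi),
    fun hz i hi => (hz i hi).trans (h i hi).symm⟩ rfl rfl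

/-- number of full configurations agreeing with `x` on `C` -/
def cnt (C : Finset V) (x : V → Λ) : ℕ :=
  (Finset.univ.filter fun x' : V → Λ => ∀ i ∈ C, x' i = x i).card

lemma cnt_const (C : Finset V) (x y : V → Λ) : cnt C x = cnt C y := by
  unfold cnt
  apply Finset.card_bij (fun x' _ => fun i => if i ∈ C then y i else x' i)
  · intro a ha
    simp only [Finset.mem_filter, Finset.mem_univ, true_and] at *
    intro i hi
    rw [if_pos hi]
  · intro a ha b hb hab
    simp only [Finset.mem_filter, Finset.mem_univ, true_and] at ha hb
    funext i
    by_cases hi : i ∈ C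
    · rw [ha i hi, hb i hi]
    · have := congrFun hab i
      rwa [if_neg hi, if_neg hi] at this
  · intro b hb
    simp only [Finset.mem_filter, Finset.mem_univ, true_and] at hb
    refine ⟨fun i => if i ∈ C then x i else b i, ?_, ?_⟩
    · simp only [Finset.mem_filter, Finset.mem_univ, true_and]
      intro i hi; rw [if_pos hi]
    · funext i
      by_cases hi : i ∈ C
      · simp only [if_pos hi]; exact (hb i hi).symm
      · simp only [if_neg hi]

lemma cnt_pos (C : Finset V) (x : V → Λ) : 0 < cnt C x :=
  Finset.card_pos.mpr ⟨x, Finset.mem_filter.mpr ⟨Finset.mem_univ x, fun _ _ => rfl⟩⟩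

lemma sum_ite_agr (C : Finset V) (x : V → Λ) (k : ℝ) :
    ∑ x' : V → Λ, (if ∀ i ∈ C, x' i = x i then k else 0) = (cnt C x : ℝ) * k := by
  rw [← Finset.sum_filter]
  simp [cnt, mul_comm]


lemma entH_marg (p : (V → Λ) → ℝ) (C : Finset V) :
    entH (marg p C) = -∑ x : V → Λ, p x * Real.log (margAt p C x) := by
  unfold entH
  have key : ∑ y : C → Λ, marg p C y * Real.log (marg p C y)
      = ∑ x : V → Λ, p x * Real.log (margAt p C x) := by
    have : ∀ y : C → Λ, marg p C y * Real.log (marg p C y)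
        = ∑ x : V → Λ, if (fun i : C => x i.1) = y then p x * Real.log (marg p C y) else 0 := by
      intro y
      rw [marg, Finset.sum_mul]
      refine Finset.sum_congr rfl fun x _ => ?_
      rw [ite_mul, zero_mul]
      exact if_congr funext_iff.symm rfl rfl
    rw [Finset.sum_congr rfl fun y _ => this y, Finset.sum_comm]
    refine Finset.sum_congr rfl fun x _ => ?_
    rw [Finset.sum_ite_eq univ (fun i : C => x i.1)
      (fun y => p x * Real.log (marg p C y)), if_pos (Finset.mem_univ _)]
    rfl
  rw [← key, ← Finset.sum_neg_distrib]
  exact Finset.sum_congr rfl fun y _ => by rw [Real.negMulLog, neg_mul]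

lemma sum_margAt_mul (q : (V → Λ) → ℝ) (S : Finset V) (F : (V → Λ) → ℝ)
    (hF : ∀ x x', (∀ i ∈ S, x i = x' i) → F x = F x') (x₀ : V → Λ) :
    ∑ x : V → Λ, margAt q S x * F x = (cnt (Λ := Λ) S x₀ : ℝ) * ∑ x : V → Λ, q x * F x := by
  have step1 : ∀ x : V → Λ, margAt q S x * F x
      = ∑ x' : V → Λ, if ∀ i ∈ S, x' i = x i then q x' * F x' else 0 := by
    intro x
    rw [margAt_def, Finset.sum_mul]
    refine Finset.sum_congr rfl fun x' _ => ?_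
    rw [ite_mul, zero_mul]
    by_cases h : ∀ i ∈ S, x' i = x i
    · rw [if_pos h, if_pos h, hF x x' fun i hi => (h i hi).symm]
    · rw [if_neg h, if_neg h]
  rw [Finset.sum_congr rfl fun x _ => step1 x, Finset.sum_comm, Finset.mul_sum]
  refine Finset.sum_congr rfl fun x' _ => ?_
  have : ∀ x : V → Λ, (if ∀ i ∈ S, x' i = x i then q x' * F x' else 0)
      = (if ∀ i ∈ S, x i = x' i then q x' * F x' else 0) := fun x =>
    if_congr ⟨fun h i hi => (h i hi).symm, fun h i hi => (h i hi).symm⟩ rfl rfl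
  rw [Finset.sum_congr rfl fun x _ => this x, sum_ite_agr, cnt_const S x' x₀]


lemma margAt_margAt (p : (V → Λ) → ℝ) (A B : Finset V) (x x₀ : V → Λ) :
    margAt (fun z => margAt p A z) B x
      = (cnt (Λ := Λ) (A ∪ B) x₀ : ℝ) * margAt p (A ∩ B) x := by
  rw [margAt_def]
  have step1 : ∀ x' : V → Λ, (if ∀ i ∈ B, x' i = x i then (fun z => margAt p A z) x' else 0)
      = ∑ x'' : V → Λ,
        if (∀ i ∈ B, x' i = x i) ∧ (∀ i ∈ A, x'' i = x' i) then p x'' else 0 := by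
    intro x'
    by_cases h : ∀ i ∈ B, x' i = x i
    · rw [if_pos h]
      show margAt p A x' = _
      rw [margAt_def]
      exact Finset.sum_congr rfl fun x'' _ => if_congr (and_iff_right h).symm rfl rfl
    · rw [if_neg h]
      symm
      exact Finset.sum_eq_zero fun x'' _ => by rw [if_neg]; tauto
  rw [Finset.sum_congr rfl fun x' _ => step1 x', Finset.sum_comm]
  have count : ∀ x'' : V → Λ,
      (∑ x' : V → Λ, if (∀ i ∈ B, x' i = x i) ∧ (∀ i ∈ A, x'' i = x' i) then p x'' else 0)
      = if ∀ i ∈ A ∩ B, x'' i = x i then (cnt (Λ := Λ) (A ∪ B) x₀ : ℝ) * p x'' else 0 := by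
    intro x''
    by_cases hI : ∀ i ∈ A ∩ B, x'' i = x i
    · rw [if_pos hI]
      have equivcond : ∀ x' : V → Λ,
          ((∀ i ∈ B, x' i = x i) ∧ (∀ i ∈ A, x'' i = x' i))
          ↔ (∀ i ∈ A ∪ B, x' i = (fun j => if j ∈ A then x'' j else x j) i) := by
        intro x'
        constructor
        · rintro ⟨hB, hA⟩ i hi
          by_cases hiA : i ∈ A
          · simp only [if_pos hiA]
            exact (hA i hiA).symm
          · have hiB : i ∈ B := (Finset.mem_union.mp hi).resolve_left hiA
            simp only [if_neg hiA]
            exact hB i hiB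
        · intro hU
          constructor
          · intro i hi
            have h1 := hU i (Finset.mem_union_right _ hi)
            by_cases hiA : i ∈ A
            · simp only [if_pos hiA] at h1
              exact h1.trans (hI i (Finset.mem_inter.mpr ⟨hiA, hi⟩))
            · simpa only [if_neg hiA] using h1
          · intro i hi
            have h1 := hU i (Finset.mem_union_left _ hi)
            simp only [if_pos hi] at h1
            exact h1.symm
      rw [Finset.sum_congr rfl fun x' _ => if_congr (equivcond x') rfl rfl, sum_ite_agr,
        cnt_const (A ∪ B) _ x₀]
    · rw [if_neg hI]
      refine Finset.sum_eq_zero fun x' _ => ?_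
      rw [if_neg]
      push_neg at hI
      obtain ⟨i, hi, hne⟩ := hI
      rintro ⟨hB, hA⟩
      exact hne ((hA i (Finset.mem_inter.mp hi).1).trans (hB i (Finset.mem_inter.mp hi).2))
  rw [Finset.sum_congr rfl fun x'' _ => count x'', margAt_def (p := p) (C := A ∩ B),
    Finset.mul_sum]
  refine Finset.sum_congr rfl fun x'' _ => ?_
  by_cases h : ∀ i ∈ A ∩ B, x'' i = x i
  · rw [if_pos h, if_pos h]
  · rw [if_neg h, if_neg h, mul_zero]

end aux


noncomputable def frat {V Λ : Type*} [Fintype V] [DecidableEq V] [Fintype Λ] [DecidableEq Λ]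
    (p : (V → Λ) → ℝ) (A B : Finset V) (x : V → Λ) : ℝ :=
  margAt p A x * margAt p B x / (margAt p (A ∪ B) x * margAt p (A ∩ B) x)


/-- the information content is a supermodular set function. -/
theorem info_supermodular {V Λ : Type*} [Fintype V] [DecidableEq V] [Fintype Λ] [DecidableEq Λ]
    (p : (V → Λ) → ℝ) (hp : ∀ x, 0 ≤ p x) (hsum : ∑ x, p x = 1)
    (A B : Finset V) :
    info p A + info p B ≤ info p (A ∪ B) + info p (A ∩ B) := by
  have hne : Nonempty (V → Λ) := by
    by_contra h
    rw [not_nonempty_iff] at h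
    rw [Finset.univ_eq_empty, Finset.sum_empty] at hsum
    exact zero_ne_one hsum
  obtain ⟨x₀⟩ := hne
  suffices H : entH (marg p (A ∪ B)) + entH (marg p (A ∩ B))
      ≤ entH (marg p A) + entH (marg p B) by
    have hs := Finset.sum_union_inter (s₁ := A) (s₂ := B) (f := fun i => entH (marg p {i}))
    unfold info
    linarith
  rw [entH_marg, entH_marg, entH_marg, entH_marg]
  have hc : (0:ℝ) < (cnt (Λ := Λ) (A ∪ B) x₀ : ℝ) := by exact_mod_cast cnt_pos _ _
  have hcB : (0:ℝ) < (cnt (Λ := Λ) B x₀ : ℝ) := by exact_mod_cast cnt_pos _ _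
  have hFmeas : ∀ x x' : V → Λ, (∀ i ∈ A ∪ B, x i = x' i) → frat p A B x = frat p A B x' := by
    intro x x' h
    unfold frat
    rw [margAt_congr p A (fun i hi => h i (Finset.mem_union_left _ hi)),
      margAt_congr p B (fun i hi => h i (Finset.mem_union_right _ hi)),
      margAt_congr p (A ∪ B) h,
      margAt_congr p (A ∩ B) (fun i hi => h i (Finset.mem_union_left _ (Finset.mem_inter.mp hi).1))]
  have hGmeas : ∀ x x' : V → Λ, (∀ i ∈ B, x i = x' i) →
      margAt p B x / margAt p (A ∩ B) x = margAt p B x' / margAt p (A ∩ B) x' := by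
    intro x x' h
    rw [margAt_congr p B h,
      margAt_congr p (A ∩ B) (fun i hi => h i (Finset.mem_inter.mp hi).2)]
  have hsumB : ∑ x : V → Λ, margAt p B x = (cnt (Λ := Λ) B x₀ : ℝ) := by
    have := sum_margAt_mul p B (fun _ => 1) (fun _ _ _ => rfl) x₀
    simpa [hsum] using this
  have hW1 : ∑ x : V → Λ, margAt p A x * (margAt p B x / margAt p (A ∩ B) x)
      = (cnt (Λ := Λ) (A ∪ B) x₀ : ℝ) := by
    have hb := sum_margAt_mul (fun z => margAt p A z) B
      (fun x => margAt p B x / margAt p (A ∩ B) x) hGmeas x₀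
    have hL : ∑ x : V → Λ,
        margAt (fun z => margAt p A z) B x * (margAt p B x / margAt p (A ∩ B) x)
        = (cnt (Λ := Λ) (A ∪ B) x₀ : ℝ) * ∑ x : V → Λ, margAt p B x := by
      rw [Finset.mul_sum]
      refine Finset.sum_congr rfl fun x _ => ?_
      rw [margAt_margAt p A B x x₀]
      by_cases hI : margAt p (A ∩ B) x = 0
      · have hBz : margAt p B x = 0 :=
          le_antisymm ((margAt_mono p hp Finset.inter_subset_right x).trans_eq hI)
            (margAt_nonneg p hp B x)
        rw [hI, hBz]
        simp
      · rw [mul_assoc, mul_comm (margAt p (A ∩ B) x), div_mul_cancel₀ _ hI]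
    rw [hL, hsumB] at hb
    have := mul_left_cancel₀ hcB.ne'
      (show (cnt (Λ := Λ) B x₀ : ℝ) * (cnt (Λ := Λ) (A ∪ B) x₀ : ℝ)
        = (cnt (Λ := Λ) B x₀ : ℝ) * ∑ x : V → Λ,
            margAt p A x * (margAt p B x / margAt p (A ∩ B) x) from by rw [← hb]; ring)
    exact this.symm
  have hterm : ∀ x : V → Λ, margAt p (A ∪ B) x * frat p A B x
      ≤ margAt p A x * (margAt p B x / margAt p (A ∩ B) x) := by
    intro x
    unfold frat
    by_cases hI : margAt p (A ∩ B) x = 0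
    · simp [hI]
    · by_cases hU : margAt p (A ∪ B) x = 0
      · rw [hU, zero_mul]
        exact mul_nonneg (margAt_nonneg p hp A x)
          (div_nonneg (margAt_nonneg p hp B x) (margAt_nonneg p hp (A ∩ B) x))
      · refine le_of_eq ?_
        field_simp
  have hTa := sum_margAt_mul p (A ∪ B) (frat p A B) hFmeas x₀
  have hcT : (cnt (Λ := Λ) (A ∪ B) x₀ : ℝ) * (∑ x : V → Λ, p x * frat p A B x)
      ≤ (cnt (Λ := Λ) (A ∪ B) x₀ : ℝ) := by
    rw [← hTa, ← hW1]
    exact Finset.sum_le_sum fun x _ => hterm x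
  have hT : ∑ x : V → Λ, p x * frat p A B x ≤ 1 := by
    exact (mul_le_iff_le_one_right hc).mp hcT
  have hptwise : ∀ x : V → Λ, p x * (1 - frat p A B x)
      ≤ p x * (Real.log (margAt p (A ∪ B) x) + Real.log (margAt p (A ∩ B) x)
             - Real.log (margAt p A x) - Real.log (margAt p B x)) := by
    intro x
    rcases eq_or_lt_of_le (hp x) with h0 | h0
    · rw [← h0]; simp
    · refine mul_le_mul_of_nonneg_left ?_ (hp x)
      have hA : 0 < margAt p A x := h0.trans_le (le_margAt p hp A x)
      have hB : 0 < margAt p B x := h0.trans_le (le_margAt p hp B x)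
      have hU : 0 < margAt p (A ∪ B) x := h0.trans_le (le_margAt p hp (A ∪ B) x)
      have hI : 0 < margAt p (A ∩ B) x := h0.trans_le (le_margAt p hp (A ∩ B) x)
      have hFpos : 0 < frat p A B x := by
        unfold frat
        exact div_pos (mul_pos hA hB) (mul_pos hU hI)
      have hlog := Real.log_le_sub_one_of_pos hFpos
      have hlogF : Real.log (frat p A B x)
          = Real.log (margAt p A x) + Real.log (margAt p B x)
            - (Real.log (margAt p (A ∪ B) x) + Real.log (margAt p (A ∩ B) x)) := by
        unfold frat
        rw [Real.log_div (mul_pos hA hB).ne' (mul_pos hU hI).ne', Real.log_mul hA.ne' hB.ne',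
          Real.log_mul hU.ne' hI.ne']
      linarith
  have hsum1 : ∑ x : V → Λ, p x * (1 - frat p A B x)
      = 1 - ∑ x : V → Λ, p x * frat p A B x := by
    simp [mul_sub, Finset.sum_sub_distrib, hsum, mul_one]
  have hfinal := Finset.sum_le_sum fun x (_ : x ∈ Finset.univ) => hptwise x
  have hexp : ∑ x : V → Λ, (p x * (Real.log (margAt p (A ∪ B) x) + Real.log (margAt p (A ∩ B) x)
             - Real.log (margAt p A x) - Real.log (margAt p B x)))
      = (∑ x : V → Λ, p x * Real.log (margAt p (A ∪ B) x))
        + (∑ x : V → Λ, p x * Real.log (margAt p (A ∩ B) x))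
        - (∑ x : V → Λ, p x * Real.log (margAt p A x))
        - (∑ x : V → Λ, p x * Real.log (margAt p B x)) := by
    rw [← Finset.sum_add_distrib, ← Finset.sum_sub_distrib, ← Finset.sum_sub_distrib]
    exact Finset.sum_congr rfl fun x _ => by ring
  linarith
end

section
/- Minimizing KL(P, P_J) over junction tree distributions is equivalent to maximizing the junction tree weight: KL(P, P_J) = I(X) − [Σ_{C∈𝒞} I(X_C) − Σ_{S∈𝒮} (ν_S − 1) I(X_S)], where the first term I(X) does not depend on the junction tree structure. -/
open Real Finset

/-- The separator associated with an edge of the junction tree: the intersection of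
the two clusters joined by the edge. -/
noncomputable def sep {V m : Type*} [DecidableEq V] (C : m → Finset V) :
    Sym2 m → Finset V :=
  Sym2.lift ⟨fun k l => C k ∩ C l, fun k l => Finset.inter_comm _ _⟩

section Aux

variable {V Λ : Type*} [Fintype V] [DecidableEq V] [Fintype Λ] [DecidableEq Λ]

lemma margAt_le (p : (V → Λ) → ℝ) (hp : ∀ x, 0 ≤ p x) (A : Finset V) (x : V → Λ) :
    p x ≤ margAt p A x := by
  classical
  have h := Finset.single_le_sum
    (f := fun x' : V → Λ => if ∀ i : A, x' i.1 = x i.1 then p x' else 0)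
    (fun i _ => by split <;> simp [hp i]) (Finset.mem_univ x)
  simpa [margAt, marg] using h

lemma sum_mul_marg (p : (V → Λ) → ℝ) (A : Finset V) (g : (A → Λ) → ℝ) :
    ∑ y : A → Λ, marg p A y * g y = ∑ x : V → Λ, p x * g (fun i => x i.1) := by
  classical
  simp only [marg, Finset.sum_mul, ite_mul, zero_mul]
  rw [Finset.sum_comm]
  have hc : ∀ (x : V → Λ) (y : A → Λ),
      (∀ i : A, x i.1 = y i) ↔ ((fun i : A => x i.1) = y) := by
    intro x y; rw [funext_iff]
  simp only [hc]
  simp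

lemma sum_mul_log_margAt (p : (V → Λ) → ℝ) (A : Finset V) :
    ∑ x : V → Λ, p x * Real.log (margAt p A x) = -entH (marg p A) := by
  classical
  have h := sum_mul_marg p A (fun y => Real.log (marg p A y))
  simp only [margAt]
  rw [← h]
  simp [entH, Real.negMulLog, neg_mul]

lemma margAt_univ (p : (V → Λ) → ℝ) (x : V → Λ) :
    margAt p (Finset.univ : Finset V) x = p x := by
  classical
  have hc : ∀ x' : V → Λ,
      (∀ i : (Finset.univ : Finset V), x' i.1 = x i.1) ↔ (x' = x) := by
    intro x'; rw [funext_iff]; simp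
  simp only [margAt, marg, hc]
  simp

end Aux

lemma cluster_edge_count {V m : Type*} [DecidableEq V] [Fintype m] [DecidableEq m]
    (C : m → Finset V) (T : SimpleGraph m) [DecidableRel T.Adj]
    (hT : T.IsTree) (v : V) (hv : ∃ k, v ∈ C k)
    (hconn : (T.induce {k : m | v ∈ C k}).Connected) :
    (Finset.univ.filter fun k => v ∈ C k).card
      = (T.edgeFinset.filter fun e => v ∈ sep C e).card + 1 := by
  classical
  set S : Set m := {k | v ∈ C k} with hSdef
  haveI : Fintype ↥S := Fintype.ofFinite _
  haveI : DecidableRel (T.induce S).Adj := fun a b =>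
    inferInstanceAs (Decidable (T.Adj a.1 b.1))
  haveI : Fintype (T.induce S).edgeSet := Fintype.ofFinite _
  have hacyc : (T.induce S).IsAcyclic := by
    intro u c hc'
    exact hT.IsAcyclic (c.map (SimpleGraph.Embedding.induce S).toHom)
      (hc'.map Subtype.val_injective)
  have htree : (T.induce S).IsTree := ⟨hconn, hacyc⟩
  have hcard := htree.card_edgeFinset
  have hS : Fintype.card ↥S = (Finset.univ.filter fun k => v ∈ C k).card := by
    have h1 : Fintype.card ↥S = Fintype.card {k : m // v ∈ C k} :=
      Fintype.card_congr (Equiv.subtypeEquivRight fun k => Iff.rfl)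
    rw [h1, Fintype.card_subtype]
  have hE : (T.induce S).edgeFinset.card
      = (T.edgeFinset.filter fun e => v ∈ sep C e).card := by
    refine Finset.card_bij (fun e _ => Sym2.map Subtype.val e) ?_ ?_ ?_
    · intro e he
      induction e using Sym2.ind with
      | _ a b =>
        rw [SimpleGraph.mem_edgeFinset, SimpleGraph.mem_edgeSet] at he
        have hadj : T.Adj a.1 b.1 := he
        simp only [Sym2.map_pair_eq, Finset.mem_filter, SimpleGraph.mem_edgeFinset,
          SimpleGraph.mem_edgeSet, sep, Sym2.lift_mk, Finset.mem_inter]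
        refine Finset.mem_filter.mpr ⟨?_, ?_⟩
        · rw [SimpleGraph.mem_edgeFinset]; exact hadj
        · simp only [Sym2.lift_mk, Finset.mem_inter]; exact ⟨a.2, b.2⟩
    · intro a _ b _ h
      exact Sym2.map.injective Subtype.val_injective h
    · intro e he
      rw [Finset.mem_filter] at he
      induction e using Sym2.ind with
      | _ k l =>
        obtain ⟨he1, he2⟩ := he
        rw [SimpleGraph.mem_edgeFinset, SimpleGraph.mem_edgeSet] at he1
        simp only [sep, Sym2.lift_mk, Finset.mem_inter] at he2
        refine ⟨s(⟨k, he2.1⟩, ⟨l, he2.2⟩), ?_, ?_⟩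
        · rw [SimpleGraph.mem_edgeFinset, SimpleGraph.mem_edgeSet]
          exact he1
        · simp [Sym2.map_pair_eq]
  omega

lemma sum_sum_eq {ι V : Type*} [Fintype V] [DecidableEq V]
    (s : Finset ι) (A : ι → Finset V) (f : V → ℝ) :
    ∑ k ∈ s, ∑ i ∈ A k, f i
      = ∑ i : V, ((s.filter fun k => i ∈ A k).card : ℝ) * f i := by
  classical
  calc ∑ k ∈ s, ∑ i ∈ A k, f i
      = ∑ k ∈ s, ∑ i : V, if i ∈ A k then f i else 0 := by
        refine Finset.sum_congr rfl fun k _ => ?_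
        rw [Finset.sum_ite_mem, Finset.univ_inter]
    _ = ∑ i : V, ∑ k ∈ s, if i ∈ A k then f i else 0 := Finset.sum_comm
    _ = _ := by
        refine Finset.sum_congr rfl fun i _ => ?_
        rw [← Finset.sum_filter, Finset.sum_const, nsmul_eq_mul]


/-- for a junction tree `(V, 𝒞, 𝒮)` (clusters `C k` arranged in a tree
`T` satisfying the running intersection property, covering `V`), the KL divergence of
the junction tree distribution `P_J(x) = ∏_C P(x_C) / ∏_S P(x_S)^{ν_S−1}` (the
separator product being taken over the edges of the tree, which counts each
separator set `S` exactly `ν_S − 1` times) from `P` satisfies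
`KL(P, P_J) = I(X) − [Σ_C I(X_C) − Σ_S (ν_S−1) I(X_S)]`; hence minimizing the KL
divergence is equivalent to maximizing the junction tree weight, the term `I(X)`
being independent of the junction tree structure. -/
theorem kl_junction_tree_weight
    {V Λ m : Type*} [Fintype V] [DecidableEq V] [Fintype Λ] [DecidableEq Λ]
    [Fintype m] [DecidableEq m]
    (p : (V → Λ) → ℝ) (hp : ∀ x, 0 ≤ p x) (hsum : ∑ x, p x = 1)
    (C : m → Finset V) (T : SimpleGraph m) [DecidableRel T.Adj]
    (hT : T.IsTree)
    (hcover : ∀ v : V, ∃ k : m, v ∈ C k)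
    (hRIP : ∀ v : V, ((T.induce {k : m | v ∈ C k}).Connected)) :
    KL p (fun x : V → Λ =>
        (∏ k : m, margAt p (C k) x) / ∏ e ∈ T.edgeFinset, margAt p (sep C e) x)
      = info p Finset.univ
        - ((∑ k : m, info p (C k)) - ∑ e ∈ T.edgeFinset, info p (sep C e)) := by
  classical
  -- Step 1: pointwise decomposition of the KL integrand
  have hpt : ∀ x : V → Λ,
      p x * Real.log (p x /
          ((∏ k : m, margAt p (C k) x) / ∏ e ∈ T.edgeFinset, margAt p (sep C e) x))
      = p x * Real.log (margAt p (Finset.univ : Finset V) x)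
        - ∑ k : m, p x * Real.log (margAt p (C k) x)
        + ∑ e ∈ T.edgeFinset, p x * Real.log (margAt p (sep C e) x) := by
    intro x
    rcases eq_or_lt_of_le (hp x) with h0 | h0
    · simp [← h0]
    · have hC : ∀ k : m, (0:ℝ) < margAt p (C k) x :=
        fun k => lt_of_lt_of_le h0 (margAt_le p hp _ x)
      have hSe : ∀ e ∈ T.edgeFinset, (0:ℝ) < margAt p (sep C e) x :=
        fun e _ => lt_of_lt_of_le h0 (margAt_le p hp _ x)
      have hA : (0:ℝ) < ∏ k : m, margAt p (C k) x :=
        Finset.prod_pos fun k _ => hC k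
      have hB : (0:ℝ) < ∏ e ∈ T.edgeFinset, margAt p (sep C e) x :=
        Finset.prod_pos hSe
      rw [margAt_univ]
      rw [Real.log_div (ne_of_gt h0) (ne_of_gt (div_pos hA hB)),
        Real.log_div (ne_of_gt hA) (ne_of_gt hB),
        Real.log_prod (fun k _ => ne_of_gt (hC k)),
        Real.log_prod (fun e he => ne_of_gt (hSe e he))]
      simp only [mul_sub, Finset.mul_sum]
      ring
  -- Step 2: sum over x and identify entropies
  have hKL : KL p (fun x : V → Λ =>
        (∏ k : m, margAt p (C k) x) / ∏ e ∈ T.edgeFinset, margAt p (sep C e) x)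
      = -entH (marg p Finset.univ) + (∑ k : m, entH (marg p (C k)))
        - ∑ e ∈ T.edgeFinset, entH (marg p (sep C e)) := by
    have h1 : KL p (fun x : V → Λ =>
        (∏ k : m, margAt p (C k) x) / ∏ e ∈ T.edgeFinset, margAt p (sep C e) x)
        = ∑ x : V → Λ, (p x * Real.log (margAt p (Finset.univ : Finset V) x)
          - ∑ k : m, p x * Real.log (margAt p (C k) x)
          + ∑ e ∈ T.edgeFinset, p x * Real.log (margAt p (sep C e) x)) :=
      Finset.sum_congr rfl fun x _ => hpt x
    rw [h1, Finset.sum_add_distrib, Finset.sum_sub_distrib]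
    rw [sum_mul_log_margAt p Finset.univ]
    rw [Finset.sum_comm (s := Finset.univ) (t := Finset.univ)
      (f := fun x k => p x * Real.log (margAt p (C k) x))]
    rw [Finset.sum_comm (s := Finset.univ) (t := T.edgeFinset)
      (f := fun x e => p x * Real.log (margAt p (sep C e) x))]
    rw [Finset.sum_congr rfl fun k _ => sum_mul_log_margAt p (C k),
      Finset.sum_congr rfl fun e _ => sum_mul_log_margAt p (sep C e)]
    simp only [Finset.sum_neg_distrib]
    ring
  -- Step 3: counting identity
  have hcount : ∀ f : V → ℝ,
      ∑ k : m, ∑ i ∈ C k, f i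
        = (∑ i : V, f i) + ∑ e ∈ T.edgeFinset, ∑ i ∈ sep C e, f i := by
    intro f
    rw [sum_sum_eq Finset.univ C f, sum_sum_eq T.edgeFinset (sep C) f]
    have hcard : ∀ i : V,
        ((Finset.univ.filter fun k => i ∈ C k).card : ℝ)
          = ((T.edgeFinset.filter fun e => i ∈ sep C e).card : ℝ) + 1 := by
      intro i
      have := cluster_edge_count C T hT i (hcover i) (hRIP i)
      exact_mod_cast congrArg (Nat.cast : ℕ → ℝ) this
    calc ∑ i : V, ((Finset.univ.filter fun k => i ∈ C k).card : ℝ) * f i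
        = ∑ i : V, (((T.edgeFinset.filter fun e => i ∈ sep C e).card : ℝ) * f i + f i) := by
          refine Finset.sum_congr rfl fun i _ => ?_
          rw [hcard i]; ring
      _ = _ := by rw [Finset.sum_add_distrib]; ring
  -- Conclusion
  rw [hKL]
  simp only [info, Finset.sum_sub_distrib]
  have := hcount (fun i => entH (marg p {i}))
  linarith
end
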